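/- arXiv:math/0206179 — 4 statements merged into one kernel-verified Lean document; each statement's English description precedes it below -/
import Mathlib

section
/- For every complex number q with 0 < |q| < 1, Σ_{ν=1}^∞ (−1)^{ν−1} q^ν/(1−q^ν) = Σ_{ν=1}^∞ q^ν/(1+q^ν). -/
lemma geomA (x : ℂ) (hx : ‖x‖ < 1) : x / (1 - x) = ∑' m : ℕ, x ^ (m + 1) := by
  calc x / (1 - x) = x * (1 - x)⁻¹ := div_eq_mul_inv x _
    _ = x * ∑' m : ℕ, x ^ m := by rw [tsum_geometric_of_norm_lt_one hx]
    _ = ∑' m : ℕ, x * x ^ m := tsum_mul_left.symm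
    _ = ∑' m : ℕ, x ^ (m + 1) := tsum_congr fun m => by rw [pow_succ, mul_comm]

lemma geomB (x : ℂ) (hx : ‖x‖ < 1) :
    x / (1 + x) = ∑' m : ℕ, (-1 : ℂ) ^ m * x ^ (m + 1) := by
  have h := geomA (-x) (by simpa using hx)
  have h2 : -(x / (1 + x)) = ∑' m : ℕ, (-x) ^ (m + 1) := by
    rw [← h]; rw [sub_neg_eq_add, neg_div]
  have h3 : x / (1 + x) = ∑' m : ℕ, -((-x) ^ (m + 1)) := by
    rw [tsum_neg, ← h2, neg_neg]
  rw [h3]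
  exact tsum_congr fun m => by rw [neg_pow]; ring

theorem logQTwo_two_representations (q : ℂ) (hq0 : 0 < ‖q‖)
    (hq1 : ‖q‖ < 1) :
    ∑' ν : ℕ, (-1 : ℂ) ^ ν * q ^ (ν + 1) / (1 - q ^ (ν + 1)) =
      ∑' ν : ℕ, q ^ (ν + 1) / (1 + q ^ (ν + 1)) := by
  have hqn : ‖q‖ < 1 := hq1
  have hpow : ∀ ν : ℕ, ‖q ^ (ν + 1)‖ < 1 := fun ν => by
    rw [norm_pow]; exact pow_lt_one₀ (norm_nonneg q) hqn (Nat.succ_ne_zero ν)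
  have hS : Summable (fun p : ℕ × ℕ => ((-1 : ℂ)) ^ p.1 * q ^ ((p.1 + 1) * (p.2 + 1))) := by
    apply Summable.of_norm
    have hg : Summable fun n : ℕ => ‖q‖ ^ n :=
      summable_geometric_of_lt_one (norm_nonneg q) hqn
    have hb : Summable fun p : ℕ × ℕ => ‖q‖ ^ p.1 * ‖q‖ ^ p.2 :=
      hg.mul_of_nonneg hg (fun n => pow_nonneg (norm_nonneg q) n)
        (fun n => pow_nonneg (norm_nonneg q) n)
    apply Summable.of_nonneg_of_le (fun p => norm_nonneg _) ?_ hb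
    intro p
    rw [norm_mul, norm_pow, norm_pow, norm_neg, norm_one, one_pow, one_mul, ← pow_add]
    exact pow_le_pow_of_le_one (norm_nonneg q) hqn.le (by nlinarith)
  calc ∑' ν : ℕ, (-1 : ℂ) ^ ν * q ^ (ν + 1) / (1 - q ^ (ν + 1))
      = ∑' ν : ℕ, ∑' m : ℕ, (-1 : ℂ) ^ ν * q ^ ((ν + 1) * (m + 1)) := by
        refine tsum_congr fun ν => ?_
        rw [mul_div_assoc, geomA _ (hpow ν), ← tsum_mul_left]
        exact tsum_congr fun m => by rw [← pow_mul]
    _ = ∑' m : ℕ, ∑' ν : ℕ, (-1 : ℂ) ^ ν * q ^ ((ν + 1) * (m + 1)) := (Summable.tsum_comm (f := fun ν m : ℕ => (-1 : ℂ) ^ ν * q ^ ((ν + 1) * (m + 1))) hS).symm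
    _ = ∑' ν : ℕ, ∑' m : ℕ, (-1 : ℂ) ^ m * q ^ ((ν + 1) * (m + 1)) :=
        tsum_congr fun ν => tsum_congr fun m => by rw [mul_comm (m + 1)]
    _ = ∑' ν : ℕ, q ^ (ν + 1) / (1 + q ^ (ν + 1)) := by
        refine tsum_congr fun ν => ?_
        rw [geomB _ (hpow ν)]
        exact tsum_congr fun m => by rw [← pow_mul]
end

section
/- For every integer k ≥ 2, the limit of (1−q)^k ζ_q(k) as q → 1 with q real and 0 < q < 1 equals (k−1)!·ζ(k), where ζ is the Riemann zeta function. -/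
open Filter

/-- The q-zeta value `ζ_q(k) = Σ_{ν=1}^∞ ν^{k-1} q^ν/(1-q^ν)` for real `q`. -/
noncomputable def zetaQ (q : ℝ) (k : ℕ) : ℝ :=
  ∑' ν : ℕ, ((ν : ℝ) + 1) ^ (k - 1) * q ^ (ν + 1) / (1 - q ^ (ν + 1))

/-- Auxiliary: `∑_ν (ν+1)^K x^(ν+1)`. -/
noncomputable def Gf (K : ℕ) (x : ℝ) : ℝ := ∑' ν : ℕ, ((ν : ℝ) + 1) ^ K * x ^ (ν + 1)

/-- Auxiliary: `∑_ν (ν+1)^K x^(ν+1)`. -/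
lemma hasSum_choose_shift (K : ℕ) {x : ℝ} (hx0 : 0 ≤ x) (hx1 : x < 1) :
    HasSum (fun ν : ℕ => (((ν + K).choose K : ℕ) : ℝ) * x ^ (ν + 1))
      (x / (1 - x) ^ (K + 1)) := by
  have h := hasSum_choose_mul_geometric_of_norm_lt_one (𝕜 := ℝ) K (r := x)
    (by rwa [Real.norm_eq_abs, abs_of_nonneg hx0])
  have h2 := h.mul_right x
  have e2 : 1 / (1 - x) ^ (K + 1) * x = x / (1 - x) ^ (K + 1) := by ring
  rw [e2] at h2
  simpa only [pow_succ, ← mul_assoc] using h2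

lemma hasSum_lower (K : ℕ) (hK : 1 ≤ K) {x : ℝ} (hx0 : 0 ≤ x) (hx1 : x < 1) :
    HasSum (fun ν : ℕ => (((ν + 1).choose K : ℕ) : ℝ) * x ^ (ν + 1))
      (x ^ K / (1 - x) ^ (K + 1)) := by
  have h := hasSum_choose_mul_geometric_of_norm_lt_one (𝕜 := ℝ) K (r := x)
    (by rwa [Real.norm_eq_abs, abs_of_nonneg hx0])
  have h2 := h.mul_right (x ^ K)
  have e2 : 1 / (1 - x) ^ (K + 1) * x ^ K = x ^ K / (1 - x) ^ (K + 1) := by ring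
  rw [e2] at h2
  have h3 : HasSum (fun n : ℕ => (((n + K).choose K : ℕ) : ℝ) * x ^ (n + K))
      (x ^ K / (1 - x) ^ (K + 1)) := by
    simpa only [pow_add, ← mul_assoc] using h2
  have hinj : Function.Injective (fun n : ℕ => n + (K - 1)) := add_left_injective _
  rw [← hinj.hasSum_iff]
  · have hfun : ∀ n : ℕ, (((n + (K - 1) + 1).choose K : ℕ) : ℝ) * x ^ (n + (K - 1) + 1)
        = (((n + K).choose K : ℕ) : ℝ) * x ^ (n + K) := by
      intro n
      have hnk : n + (K - 1) + 1 = n + K := by omega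
      rw [hnk]
    simpa only [Function.comp_def, hfun] using h3
  · intro m hm
    have hmlt : m < K - 1 := by
      by_contra hc
      push_neg at hc
      exact hm ⟨m - (K - 1), by simp; omega⟩
    have : (m + 1).choose K = 0 := Nat.choose_eq_zero_of_lt (by omega)
    simp [this]
lemma term_le (K ν : ℕ) {x : ℝ} (hx0 : 0 ≤ x) :
    ((ν : ℝ) + 1) ^ K * x ^ (ν + 1)
      ≤ (K.factorial : ℝ) * (((ν + K).choose K : ℕ) : ℝ) * x ^ (ν + 1) := by
  apply mul_le_mul_of_nonneg_right _ (pow_nonneg hx0 _)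
  have hn : (ν + 1) ^ K ≤ K.factorial * ((ν + K).choose K) := by
    rw [← Nat.descFactorial_eq_factorial_mul_choose]
    have := Nat.pow_sub_le_descFactorial (ν + K) K
    simpa [Nat.add_sub_cancel, show ν + K + 1 - K = ν + 1 by omega] using this
  calc ((ν : ℝ) + 1) ^ K = (((ν + 1 : ℕ)) : ℝ) ^ K := by push_cast; ring
    _ ≤ _ := by exact_mod_cast Nat.cast_le.2 hn

lemma term_ge (K ν : ℕ) {x : ℝ} (hx0 : 0 ≤ x) :
    (K.factorial : ℝ) * (((ν + 1).choose K : ℕ) : ℝ) * x ^ (ν + 1)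
      ≤ ((ν : ℝ) + 1) ^ K * x ^ (ν + 1) := by
  apply mul_le_mul_of_nonneg_right _ (pow_nonneg hx0 _)
  have hn : K.factorial * ((ν + 1).choose K) ≤ (ν + 1) ^ K := by
    rw [← Nat.descFactorial_eq_factorial_mul_choose]
    exact Nat.descFactorial_le_pow _ _
  calc (K.factorial : ℝ) * (((ν + 1).choose K : ℕ) : ℝ)
      = ((K.factorial * ((ν + 1).choose K) : ℕ) : ℝ) := by push_cast; ring
    _ ≤ (((ν + 1) ^ K : ℕ) : ℝ) := Nat.cast_le.2 hn
    _ = ((ν : ℝ) + 1) ^ K := by push_cast; ring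

lemma Gf_summable (K : ℕ) {x : ℝ} (hx0 : 0 ≤ x) (hx1 : x < 1) :
    Summable (fun ν : ℕ => ((ν : ℝ) + 1) ^ K * x ^ (ν + 1)) := by
  refine Summable.of_nonneg_of_le (fun ν => by positivity) (fun ν => term_le K ν hx0) ?_
  have := ((hasSum_choose_shift K hx0 hx1).summable.mul_left (K.factorial : ℝ))
  simpa only [← mul_assoc] using this

lemma Gf_nonneg (K : ℕ) {x : ℝ} (hx0 : 0 ≤ x) : 0 ≤ Gf K x :=
  tsum_nonneg fun ν => by positivity

lemma Gf_le (K : ℕ) {x : ℝ} (hx0 : 0 ≤ x) (hx1 : x < 1) :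
    Gf K x ≤ (K.factorial : ℝ) * (x / (1 - x) ^ (K + 1)) := by
  have h := (hasSum_choose_shift K hx0 hx1).mul_left (K.factorial : ℝ)
  rw [Gf, ← h.tsum_eq]
  refine Summable.tsum_le_tsum (fun ν => ?_) (Gf_summable K hx0 hx1) h.summable
  simpa only [← mul_assoc] using term_le K ν hx0

lemma le_Gf (K : ℕ) (hK : 1 ≤ K) {x : ℝ} (hx0 : 0 ≤ x) (hx1 : x < 1) :
    (K.factorial : ℝ) * (x ^ K / (1 - x) ^ (K + 1)) ≤ Gf K x := by
  have h := (hasSum_lower K hK hx0 hx1).mul_left (K.factorial : ℝ)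
  rw [Gf, ← h.tsum_eq]
  refine Summable.tsum_le_tsum (fun ν => ?_) h.summable (Gf_summable K hx0 hx1)
  simpa only [← mul_assoc] using term_ge K ν hx0
lemma pow_swap (q : ℝ) (ν m : ℕ) : (q ^ (ν + 1)) ^ (m + 1) = (q ^ (m + 1)) ^ (ν + 1) := by
  rw [← pow_mul, ← pow_mul, mul_comm]

lemma row_hasSum {q : ℝ} (hq0 : 0 < q) (hq1 : q < 1) (K ν : ℕ) :
    HasSum (fun m : ℕ => ((ν : ℝ) + 1) ^ K * (q ^ (ν + 1)) ^ (m + 1))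
      (((ν : ℝ) + 1) ^ K * q ^ (ν + 1) / (1 - q ^ (ν + 1))) := by
  set r : ℝ := q ^ (ν + 1) with hr
  have hr0 : 0 ≤ r := by positivity
  have hr1 : r < 1 := pow_lt_one₀ hq0.le hq1 (by omega)
  have h := (hasSum_geometric_of_lt_one hr0 hr1).mul_right r
  have h2 := h.mul_left (((ν : ℝ) + 1) ^ K)
  have e1 : ((ν : ℝ) + 1) ^ K * ((1 - r)⁻¹ * r)
      = ((ν : ℝ) + 1) ^ K * r / (1 - r) := by ring
  rw [e1] at h2
  simpa only [pow_succ, ← mul_assoc] using h2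

lemma zetaQ_eq (K : ℕ) {q : ℝ} (hq0 : 0 < q) (hq1 : q < 1) :
    zetaQ q (K + 1) = ∑' m : ℕ, Gf K (q ^ (m + 1)) := by
  have hq0' : (0:ℝ) ≤ q := hq0.le
  set f : ℕ → ℕ → ℝ := fun ν m => ((ν : ℝ) + 1) ^ K * (q ^ (ν + 1)) ^ (m + 1) with hf
  have hrow : ∀ ν, Summable (f ν) := fun ν => (row_hasSum hq0 hq1 K ν).summable
  have hcol : ∀ m, Summable (fun ν => f ν m) := by
    intro m
    have := Gf_summable K (x := q ^ (m + 1)) (by positivity)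
      (pow_lt_one₀ hq0' hq1 (by omega))
    refine this.congr fun ν => ?_
    simp only [hf, pow_swap]
  have hcolsum : Summable (fun ν => ∑' m, f ν m) := by
    have hsummand : ∀ ν : ℕ, ∑' m, f ν m
        = ((ν : ℝ) + 1) ^ K * q ^ (ν + 1) / (1 - q ^ (ν + 1)) :=
      fun ν => (row_hasSum hq0 hq1 K ν).tsum_eq
    rw [funext hsummand]
    have hbase : Summable (fun ν : ℕ => ((ν : ℝ) + 1) ^ K * q ^ (ν + 1) / (1 - q)) :=
      (Gf_summable K hq0' hq1).div_const _
    refine Summable.of_nonneg_of_le (fun ν => ?_) (fun ν => ?_) hbase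
    · have h1 : (0:ℝ) < 1 - q ^ (ν + 1) := by
        have := pow_lt_one₀ hq0' hq1 (show ν + 1 ≠ 0 by omega); linarith
      positivity
    · apply div_le_div_of_nonneg_left (by positivity) (by linarith)
      have : q ^ (ν + 1) ≤ q := by
        calc q ^ (ν + 1) ≤ q ^ 1 := pow_le_pow_of_le_one hq0' hq1.le (by omega)
          _ = q := pow_one q
      linarith
  have huncurry : Summable (Function.uncurry f) := by
    refine (summable_prod_of_nonneg ?_).2 ⟨fun ν => hrow ν, hcolsum⟩
    intro p
    simp only [Function.uncurry, hf]
    positivity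
  calc zetaQ q (K + 1)
      = ∑' ν : ℕ, ((ν : ℝ) + 1) ^ K * q ^ (ν + 1) / (1 - q ^ (ν + 1)) := by
        simp [zetaQ]
    _ = ∑' (ν : ℕ), ∑' (m : ℕ), f ν m := by
        refine tsum_congr fun ν => ((row_hasSum hq0 hq1 K ν).tsum_eq).symm
    _ = ∑' m, ∑' ν, f ν m := (Summable.tsum_comm' huncurry hrow hcol).symm
    _ = ∑' m : ℕ, Gf K (q ^ (m + 1)) := by
        refine tsum_congr fun m => tsum_congr fun ν => ?_
        simp only [hf, pow_swap]
lemma geom_identity {q : ℝ} (m : ℕ) :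
    (∑ i ∈ Finset.range (m + 1), q ^ i) * (1 - q) = 1 - q ^ (m + 1) := by
  have h := geom_sum_mul q (m + 1)
  linear_combination -h

lemma bound_lemma (K : ℕ) {q : ℝ} (hq0 : 0 < q) (hq1 : q < 1) (m : ℕ) :
    (1 - q) ^ (K + 1) * Gf K (q ^ (m + 1))
      ≤ (K.factorial : ℝ) * 2 ^ (K + 1) * ((K + 1).factorial : ℝ) / ((m : ℝ) + 1) ^ (K + 1) := by
  set x := q ^ (m + 1) with hx
  have hx0 : 0 < x := by positivity
  have hx1 : x < 1 := pow_lt_one₀ hq0.le hq1 (by omega)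
  have h1x : (0:ℝ) < 1 - x := by linarith
  have h1q : (0:ℝ) < 1 - q := by linarith
  have hm1 : (0:ℝ) < (m : ℝ) + 1 := by positivity
  have step1 : (1 - q) ^ (K + 1) * Gf K x
      ≤ (K.factorial : ℝ) * x * ((1 - q) / (1 - x)) ^ (K + 1) := by
    calc (1 - q) ^ (K + 1) * Gf K x
        ≤ (1 - q) ^ (K + 1) * ((K.factorial : ℝ) * (x / (1 - x) ^ (K + 1))) :=
          mul_le_mul_of_nonneg_left (Gf_le K hx0.le hx1) (by positivity)
      _ = (K.factorial : ℝ) * x * ((1 - q) / (1 - x)) ^ (K + 1) := by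
          rw [div_pow]; field_simp
  refine step1.trans ?_
  have hrpos : (0:ℝ) ≤ (1 - q) / (1 - x) := by positivity
  rcases le_or_gt (1/2 : ℝ) x with hhalf | hhalf
  · -- x ≥ 1/2
    set S := ∑ i ∈ Finset.range (m + 1), q ^ i with hS
    have hgeom : S * (1 - q) = 1 - x := geom_identity m
    have hSlb : ((m : ℝ) + 1) * x ≤ S := by
      have hterm : ∀ i ∈ Finset.range (m + 1), x ≤ q ^ i := by
        intro i hi
        simp only [Finset.mem_range] at hi
        exact pow_le_pow_of_le_one hq0.le hq1.le (by omega)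
      calc ((m : ℝ) + 1) * x = ∑ _i ∈ Finset.range (m + 1), x := by
            rw [Finset.sum_const, Finset.card_range]; push_cast; ring
        _ ≤ S := Finset.sum_le_sum hterm
    have hSpos : (0:ℝ) < S := lt_of_lt_of_le (by positivity) hSlb
    have hr : (1 - q) / (1 - x) ≤ 2 / ((m : ℝ) + 1) := by
      have he : (1 - q) / (1 - x) = 1 / S := by
        rw [← hgeom]; field_simp
      rw [he, div_le_div_iff₀ hSpos hm1]
      nlinarith
    calc (K.factorial : ℝ) * x * ((1 - q) / (1 - x)) ^ (K + 1)
        ≤ (K.factorial : ℝ) * 1 * (2 / ((m : ℝ) + 1)) ^ (K + 1) := by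
          apply mul_le_mul (by gcongr) (by gcongr) (by positivity) (by positivity)
      _ = (K.factorial : ℝ) * 2 ^ (K + 1) * 1 / ((m : ℝ) + 1) ^ (K + 1) := by
          rw [div_pow]; ring
      _ ≤ (K.factorial : ℝ) * 2 ^ (K + 1) * ((K + 1).factorial : ℝ) / ((m : ℝ) + 1) ^ (K + 1) := by
          gcongr
          exact_mod_cast (K + 1).factorial_pos
  · -- x < 1/2
    have hr : (1 - q) / (1 - x) ≤ 2 * (1 - q) := by
      rw [div_le_iff₀ h1x]
      nlinarith
    have hqexp : x ≤ Real.exp (-(((m : ℝ) + 1) * (1 - q))) := by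
      have h1 : q ≤ Real.exp (q - 1) := by
        have := Real.add_one_le_exp (q - 1); linarith
      have h2 : x ≤ (Real.exp (q - 1)) ^ (m + 1) := pow_le_pow_left₀ hq0.le h1 _
      rw [← Real.exp_nat_mul] at h2
      convert h2 using 2
      push_cast; ring
    set t := ((m : ℝ) + 1) * (1 - q) with ht
    have ht0 : (0:ℝ) < t := by positivity
    have htexp : t ^ (K + 1) ≤ ((K + 1).factorial : ℝ) * Real.exp t := by
      have hsum := Real.sum_le_exp_of_nonneg ht0.le (K + 2)
      have hterm : t ^ (K + 1) / ((K + 1).factorial : ℝ)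
          ≤ ∑ i ∈ Finset.range (K + 2), t ^ i / (i.factorial : ℝ) :=
        Finset.single_le_sum (f := fun i => t ^ i / (i.factorial : ℝ))
          (fun i _ => by positivity) (by simp)
      have h3 := hterm.trans hsum
      rw [div_le_iff₀ (by positivity)] at h3
      linarith [h3, mul_comm (Real.exp t) ((K + 1).factorial : ℝ)]
    have hkey : x * (1 - q) ^ (K + 1) ≤ ((K + 1).factorial : ℝ) / ((m : ℝ) + 1) ^ (K + 1) := by
      have e : (1 - q) ^ (K + 1) = t ^ (K + 1) / ((m : ℝ) + 1) ^ (K + 1) := by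
        rw [ht, mul_pow]; field_simp
      have e2 : Real.exp (-t) * (((K + 1).factorial : ℝ) * Real.exp t)
          = ((K + 1).factorial : ℝ) := by
        rw [Real.exp_neg]; field_simp
      calc x * (1 - q) ^ (K + 1)
          ≤ Real.exp (-t) * (t ^ (K + 1) / ((m : ℝ) + 1) ^ (K + 1)) := by
            rw [e]; exact mul_le_mul_of_nonneg_right hqexp (by positivity)
        _ = (Real.exp (-t) * t ^ (K + 1)) / ((m : ℝ) + 1) ^ (K + 1) := by ring
        _ ≤ ((K + 1).factorial : ℝ) / ((m : ℝ) + 1) ^ (K + 1) := by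
            have hnum : Real.exp (-t) * t ^ (K + 1) ≤ ((K + 1).factorial : ℝ) := by
              calc Real.exp (-t) * t ^ (K + 1)
                  ≤ Real.exp (-t) * (((K + 1).factorial : ℝ) * Real.exp t) :=
                    mul_le_mul_of_nonneg_left htexp (Real.exp_pos _).le
                _ = ((K + 1).factorial : ℝ) := e2
            gcongr
    calc (K.factorial : ℝ) * x * ((1 - q) / (1 - x)) ^ (K + 1)
        ≤ (K.factorial : ℝ) * x * (2 * (1 - q)) ^ (K + 1) := by
          apply mul_le_mul_of_nonneg_left (pow_le_pow_left₀ hrpos hr _) (by positivity)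
      _ = (K.factorial : ℝ) * 2 ^ (K + 1) * (x * (1 - q) ^ (K + 1)) := by
          rw [mul_pow]; ring
      _ ≤ (K.factorial : ℝ) * 2 ^ (K + 1) * (((K + 1).factorial : ℝ) / ((m : ℝ) + 1) ^ (K + 1)) :=
          mul_le_mul_of_nonneg_left hkey (by positivity)
      _ = (K.factorial : ℝ) * 2 ^ (K + 1) * ((K + 1).factorial : ℝ) / ((m : ℝ) + 1) ^ (K + 1) := by
          rw [mul_div_assoc]
lemma pointwise_limit (K : ℕ) (hK : 1 ≤ K) (m : ℕ) :
    Tendsto (fun q : ℝ => (1 - q) ^ (K + 1) * Gf K (q ^ (m + 1)))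
      (nhdsWithin 1 (Set.Ioo 0 1))
      (nhds ((K.factorial : ℝ) / ((m : ℝ) + 1) ^ (K + 1))) := by
  set S : ℝ → ℝ := fun q => ∑ i ∈ Finset.range (m + 1), q ^ i with hSdef
  have hScont : Continuous S := by
    apply continuous_finset_sum
    intro i _
    exact continuous_pow i
  have hS1 : S 1 = (m : ℝ) + 1 := by
    simp [hSdef, Finset.sum_const, Finset.card_range]
  have hSne : S 1 ≠ 0 := by rw [hS1]; positivity
  have hSinv : Tendsto (fun q : ℝ => (S q)⁻¹) (nhds 1) (nhds (((m : ℝ) + 1)⁻¹)) := by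
    have := (hScont.tendsto 1).inv₀ hSne
    rwa [hS1] at this
  have hqpow : ∀ j : ℕ, Tendsto (fun q : ℝ => q ^ j) (nhds (1:ℝ)) (nhds 1) := by
    intro j
    have := (continuous_pow j (M := ℝ)).tendsto 1
    simpa using this
  have hval : (K.factorial : ℝ) * 1 * (((m : ℝ) + 1)⁻¹) ^ (K + 1)
      = (K.factorial : ℝ) / ((m : ℝ) + 1) ^ (K + 1) := by
    rw [inv_pow]; field_simp
  have hlo_tendsto : Tendsto
      (fun q : ℝ => (K.factorial : ℝ) * (q ^ (m + 1)) ^ K * ((S q)⁻¹) ^ (K + 1))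
      (nhdsWithin 1 (Set.Ioo 0 1))
      (nhds ((K.factorial : ℝ) / ((m : ℝ) + 1) ^ (K + 1))) := by
    rw [← hval]
    apply Tendsto.mono_left _ nhdsWithin_le_nhds
    have h1 : Tendsto (fun q : ℝ => (q ^ (m + 1)) ^ K) (nhds 1) (nhds 1) := by
      simpa using ((hqpow (m + 1)).pow K)
    exact ((tendsto_const_nhds.mul h1).mul (hSinv.pow (K + 1)))
  have hhi_tendsto : Tendsto
      (fun q : ℝ => (K.factorial : ℝ) * q ^ (m + 1) * ((S q)⁻¹) ^ (K + 1))
      (nhdsWithin 1 (Set.Ioo 0 1))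
      (nhds ((K.factorial : ℝ) / ((m : ℝ) + 1) ^ (K + 1))) := by
    rw [← hval]
    apply Tendsto.mono_left _ nhdsWithin_le_nhds
    exact ((tendsto_const_nhds.mul (hqpow (m + 1))).mul (hSinv.pow (K + 1)))
  have key : ∀ q ∈ Set.Ioo (0:ℝ) 1,
      (K.factorial : ℝ) * (q ^ (m + 1)) ^ K * ((S q)⁻¹) ^ (K + 1)
          ≤ (1 - q) ^ (K + 1) * Gf K (q ^ (m + 1))
        ∧ (1 - q) ^ (K + 1) * Gf K (q ^ (m + 1))
          ≤ (K.factorial : ℝ) * q ^ (m + 1) * ((S q)⁻¹) ^ (K + 1) := by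
    intro q hq
    obtain ⟨hq0, hq1⟩ := hq
    set x := q ^ (m + 1) with hx
    have hx0 : 0 < x := by positivity
    have hx1 : x < 1 := pow_lt_one₀ hq0.le hq1 (by omega)
    have h1x : (0:ℝ) < 1 - x := by linarith
    have h1q : (0:ℝ) < 1 - q := by linarith
    have hgeom : S q * (1 - q) = 1 - x := geom_identity m
    have hSpos : 0 < S q := by
      have hSq : S q = (1 - x) / (1 - q) := by
        rw [← hgeom]; field_simp
      rw [hSq]; positivity
    have hratio : (1 - q) ^ (K + 1) / (1 - x) ^ (K + 1) = ((S q)⁻¹) ^ (K + 1) := by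
      rw [← div_pow]
      congr 1
      rw [← hgeom, mul_comm, div_mul_cancel_left₀ h1q.ne']
    constructor
    · have h := mul_le_mul_of_nonneg_left (le_Gf K hK hx0.le hx1)
        (by positivity : (0:ℝ) ≤ (1 - q) ^ (K + 1))
      calc (K.factorial : ℝ) * x ^ K * ((S q)⁻¹) ^ (K + 1)
          = (K.factorial : ℝ) * x ^ K
            * ((1 - q) ^ (K + 1) / (1 - x) ^ (K + 1)) := by rw [hratio]
        _ = (1 - q) ^ (K + 1) * ((K.factorial : ℝ) * (x ^ K / (1 - x) ^ (K + 1))) := by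
            ring
        _ ≤ (1 - q) ^ (K + 1) * Gf K x := h
    · have h := mul_le_mul_of_nonneg_left (Gf_le K hx0.le hx1)
        (by positivity : (0:ℝ) ≤ (1 - q) ^ (K + 1))
      calc (1 - q) ^ (K + 1) * Gf K x
          ≤ (1 - q) ^ (K + 1) * ((K.factorial : ℝ) * (x / (1 - x) ^ (K + 1))) := h
        _ = (K.factorial : ℝ) * x * ((1 - q) ^ (K + 1) / (1 - x) ^ (K + 1)) := by ring
        _ = (K.factorial : ℝ) * x * ((S q)⁻¹) ^ (K + 1) := by rw [hratio]
  refine tendsto_of_tendsto_of_tendsto_of_le_of_le' hlo_tendsto hhi_tendsto ?_ ?_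
  · filter_upwards [self_mem_nhdsWithin] with q hq
    exact (key q hq).1
  · filter_upwards [self_mem_nhdsWithin] with q hq
    exact (key q hq).2
theorem zetaQ_limit (k : ℕ) (hk : 2 ≤ k) :
    Tendsto (fun q : ℝ => (1 - q) ^ k * zetaQ q k) (nhdsWithin 1 (Set.Ioo 0 1))
      (nhds ((Nat.factorial (k - 1) : ℝ) * ∑' n : ℕ, 1 / ((n : ℝ) + 1) ^ k)) := by
  obtain ⟨K, rfl⟩ : ∃ K, k = K + 1 := ⟨k - 1, by omega⟩
  have hK : 1 ≤ K := by omega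
  have hsummable : Summable (fun m : ℕ => (1 : ℝ) / ((m : ℝ) + 1) ^ (K + 1)) := by
    have h := (summable_nat_add_iff (f := fun n : ℕ => 1 / (n : ℝ) ^ (K + 1)) 1).2
      (Real.summable_one_div_nat_pow.2 (by omega))
    refine h.congr fun n => ?_
    push_cast
    ring_nf
  have hbound_summable : Summable (fun m : ℕ =>
      (K.factorial : ℝ) * 2 ^ (K + 1) * ((K + 1).factorial : ℝ) / ((m : ℝ) + 1) ^ (K + 1)) := by
    have := hsummable.mul_left ((K.factorial : ℝ) * 2 ^ (K + 1) * ((K + 1).factorial : ℝ))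
    refine this.congr fun m => ?_
    rw [mul_one_div]
  have hDCT : Tendsto (fun q : ℝ => ∑' m : ℕ, (1 - q) ^ (K + 1) * Gf K (q ^ (m + 1)))
      (nhdsWithin 1 (Set.Ioo 0 1))
      (nhds (∑' m : ℕ, (K.factorial : ℝ) / ((m : ℝ) + 1) ^ (K + 1))) := by
    apply tendsto_tsum_of_dominated_convergence hbound_summable (pointwise_limit K hK)
    filter_upwards [self_mem_nhdsWithin] with q hq m
    obtain ⟨hq0, hq1⟩ := hq
    have hnn : 0 ≤ (1 - q) ^ (K + 1) * Gf K (q ^ (m + 1)) := by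
      have := Gf_nonneg K (x := q ^ (m + 1)) (by positivity)
      have h1q : (0:ℝ) ≤ 1 - q := by linarith
      positivity
    rw [Real.norm_eq_abs, abs_of_nonneg hnn]
    exact bound_lemma K hq0 hq1 m
  have hval : ∑' m : ℕ, (K.factorial : ℝ) / ((m : ℝ) + 1) ^ (K + 1)
      = (Nat.factorial (K + 1 - 1) : ℝ) * ∑' n : ℕ, 1 / ((n : ℝ) + 1) ^ (K + 1) := by
    simp only [Nat.add_sub_cancel]
    rw [← tsum_mul_left]
    refine tsum_congr fun m => ?_
    rw [mul_one_div]
  rw [← hval]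
  refine hDCT.congr' ?_
  filter_upwards [self_mem_nhdsWithin] with q hq
  obtain ⟨hq0, hq1⟩ := hq
  rw [zetaQ_eq K hq0 hq1, ← tsum_mul_left]
end

section
/- Let the polynomials ρ_k(x) ∈ ℤ[x] be defined recursively by ρ_1(x) = 1 and ρ_{k+1}(x) = (1+(k−1)x)ρ_k(x) + x(1−x)ρ_k′(x) for k = 1, 2, …. Then for every integer k ≥ 1 and every complex number q with 0 < |q| < 1, Σ_{ν=1}^∞ ν^{k−1} q^ν/(1−q^ν) = Σ_{ν=1}^∞ q^ν ρ_k(q^ν)/(1−q^ν)^k. -/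
open Polynomial

/-- The polynomials `ρ_k ∈ ℤ[x]` defined by `ρ_1 = 1` and
`ρ_{k+1} = (1 + (k-1)x) ρ_k + x(1-x) ρ_k'`. (`rho 0` is a junk value.) -/
noncomputable def rho : ℕ → Polynomial ℤ
  | 0 => 0
  | 1 => 1
  | (k + 2) =>
      (1 + (C (k : ℤ)) * X) * rho (k + 1) + X * (1 - X) * derivative (rho (k + 1))

lemma hasSum_geom_succ {x : ℂ} (hx : ‖x‖ < 1) :
    HasSum (fun m : ℕ => x ^ (m + 1)) (x / (1 - x)) := by
  have h := (hasSum_geometric_of_norm_lt_one hx).mul_left x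
  simpa [pow_succ', div_eq_mul_inv] using h

lemma summable_succ_pow_mul_geom (j : ℕ) {r : ℝ} (hr0 : 0 ≤ r) (hr : r < 1) :
    Summable (fun n : ℕ => ((n : ℝ) + 1) ^ j * r ^ n) := by
  rcases eq_or_lt_of_le hr0 with hr0' | hr0'
  · apply summable_of_ne_finset_zero (s := {0})
    intro n hn
    simp only [Finset.mem_singleton] at hn
    rw [← hr0', zero_pow hn, mul_zero]
  · have h : Summable (fun n : ℕ => (n : ℝ) ^ j * r ^ n) := by
      have : ‖r‖ < 1 := by rwa [Real.norm_eq_abs, abs_of_nonneg hr0]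
      exact summable_pow_mul_geometric_of_norm_lt_one j this
    have h2 := h.comp_injective Nat.succ_injective
    have h3 := h2.mul_left (r⁻¹)
    apply h3.congr
    intro n
    simp only [Function.comp]
    push_cast
    field_simp
    rw [Nat.succ_eq_add_one]; ring

/-- The key analytic fact: `∑ (ν+1)^{k-1} x^{ν+1} = x ρ_k(x)/(1-x)^k` for `‖x‖ < 1`. -/
lemma key_hasSum : ∀ k : ℕ, 1 ≤ k → ∀ x : ℂ, ‖x‖ < 1 →
    HasSum (fun ν : ℕ => ((ν : ℂ) + 1) ^ (k - 1) * x ^ (ν + 1))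
      (x * (Polynomial.aeval x (rho k)) / (1 - x) ^ k) := by
  intro k hk
  induction k, hk using Nat.le_induction with
  | base =>
    intro x hx
    have h := hasSum_geom_succ hx
    simpa [rho] using h
  | succ k hk ih =>
    obtain ⟨j, rfl⟩ : ∃ j, k = j + 1 := ⟨k - 1, by omega⟩
    intro x hx
    -- set up the radius
    set r : ℝ := (‖x‖ + 1) / 2 with hr_def
    have hxr : ‖x‖ < r := by rw [hr_def]; linarith
    have hr1 : r < 1 := by rw [hr_def]; linarith
    have hr0 : 0 ≤ r := by positivity
    have hx1 : (1 : ℂ) - x ≠ 0 := by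
      intro h
      have : x = 1 := by linear_combination -h
      rw [this] at hx; simp at hx
    -- functions and derivatives
    set f : ℕ → ℂ → ℂ := fun ν y => ((ν : ℂ) + 1) ^ j * y ^ (ν + 1) with hf_def
    set f' : ℕ → ℂ → ℂ := fun ν y => ((ν : ℂ) + 1) ^ (j + 1) * y ^ ν with hf'_def
    have hderiv : ∀ ν : ℕ, ∀ y : ℂ, HasDerivAt (f ν) (f' ν y) y := by
      intro ν y
      have h := (hasDerivAt_pow (ν + 1) y).const_mul (((ν : ℂ) + 1) ^ j)
      simp only [Nat.add_sub_cancel, Nat.cast_add, Nat.cast_one] at h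
      exact h.congr_deriv (by simp only [hf'_def]; ring)
    set u : ℕ → ℝ := fun ν => ((ν : ℝ) + 1) ^ (j + 1) * r ^ ν with hu_def
    have hu : Summable u := summable_succ_pow_mul_geom (j + 1) hr0 hr1
    have hbound : ∀ ν : ℕ, ∀ y : ℂ, y ∈ Metric.ball (0 : ℂ) r → ‖f' ν y‖ ≤ u ν := by
      intro ν y hy
      simp only [Metric.mem_ball, dist_zero_right] at hy
      have hnorm : ‖((ν : ℂ) + 1)‖ = (ν : ℝ) + 1 := by
        rw [show ((ν : ℂ) + 1) = ((ν + 1 : ℕ) : ℂ) by push_cast; ring, Complex.norm_natCast]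
        push_cast; ring
      rw [hf'_def, hu_def]
      simp only [norm_mul, norm_pow, hnorm]
      gcongr
    -- summability at 0
    have hsum0 : Summable (fun ν => f ν 0) := by
      apply summable_of_ne_finset_zero (s := ∅)
      intro ν _
      simp [hf_def]
    have hball : x ∈ Metric.ball (0 : ℂ) r := by
      rw [Metric.mem_ball, dist_zero_right]; exact hxr
    have h0ball : (0 : ℂ) ∈ Metric.ball (0 : ℂ) r := by
      rw [Metric.mem_ball, dist_zero_right]
      simp only [norm_zero]
      have := norm_nonneg x
      rw [hr_def]; linarith
    -- derivative of the tsum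
    have hg : HasDerivAt (fun z => ∑' ν, f ν z) (∑' ν, f' ν x) x :=
      hasDerivAt_tsum_of_isPreconnected hu Metric.isOpen_ball
        (convex_ball (0 : ℂ) r).isPreconnected (fun n y _ => hderiv n y) hbound h0ball hsum0 hball
    -- the tsum equals F on the unit ball
    set P : Polynomial ℂ := (rho (j + 1)).map (algebraMap ℤ ℂ) with hP_def
    have haeval : ∀ y : ℂ, Polynomial.aeval y (rho (j + 1)) = P.eval y := by
      intro y; rw [hP_def, Polynomial.aeval_def, Polynomial.eval_map]
    set F : ℂ → ℂ := fun y => y * P.eval y / (1 - y) ^ (j + 1) with hF_def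
    have heq : ∀ y : ℂ, ‖y‖ < 1 → (∑' ν, f ν y) = F y := by
      intro y hy
      show (∑' ν, f ν y) = y * P.eval y / (1 - y) ^ (j + 1)
      rw [← haeval]
      exact (ih y hy).tsum_eq
    -- F has an explicit derivative
    have hF1 : HasDerivAt (fun y : ℂ => y * P.eval y)
        (1 * P.eval x + x * P.derivative.eval x) x :=
      (hasDerivAt_id x).mul (P.hasDerivAt x)
    have hF2 : HasDerivAt (fun y : ℂ => (1 - y) ^ (j + 1))
        ((j + 1 : ℕ) * (1 - x) ^ j * (-1)) x := by
      have h := (((hasDerivAt_id x).const_sub 1).fun_pow (j + 1))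
      simpa using h
    have hne : ((1 : ℂ) - x) ^ (j + 1) ≠ 0 := pow_ne_zero _ hx1
    have hFD : HasDerivAt F
        (((1 * P.eval x + x * P.derivative.eval x) * (1 - x) ^ (j + 1) -
          x * P.eval x * ((j + 1 : ℕ) * (1 - x) ^ j * (-1))) / ((1 - x) ^ (j + 1)) ^ 2) x :=
      hF1.div hF2 hne
    -- transfer F's derivative to the tsum via local equality
    have hloc : F =ᶠ[nhds x] (fun z => ∑' ν, f ν z) := by
      have : Metric.ball (0 : ℂ) 1 ∈ nhds x := by
        apply Metric.isOpen_ball.mem_nhds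
        simpa [Metric.mem_ball, dist_zero_right] using hx
      filter_upwards [this] with y hy
      simp only [Metric.mem_ball, dist_zero_right] at hy
      exact (heq y hy).symm
    have hFD' : HasDerivAt (fun z => ∑' ν, f ν z)
        (((1 * P.eval x + x * P.derivative.eval x) * (1 - x) ^ (j + 1) -
          x * P.eval x * ((j + 1 : ℕ) * (1 - x) ^ j * (-1))) / ((1 - x) ^ (j + 1)) ^ 2) x :=
      hFD.congr_of_eventuallyEq hloc.symm
    have hderiv_eq : (∑' ν, f' ν x) =
        ((1 * P.eval x + x * P.derivative.eval x) * (1 - x) ^ (j + 1) -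
          x * P.eval x * ((j + 1 : ℕ) * (1 - x) ^ j * (-1))) / ((1 - x) ^ (j + 1)) ^ 2 :=
      hg.unique hFD'
    -- identify the derivative quotient with ρ_{j+2}
    have haeval2 : (Polynomial.aeval x (rho (j + 1 + 1)) : ℂ) =
        (1 + (j : ℂ) * x) * P.eval x + x * (1 - x) * P.derivative.eval x := by
      show (Polynomial.aeval x (rho (j + 2)) : ℂ) = _
      have hd : (Polynomial.aeval x (derivative (rho (j + 1))) : ℂ) = P.derivative.eval x := by
        rw [hP_def, Polynomial.derivative_map, Polynomial.aeval_def, Polynomial.eval_map]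
      rw [show rho (j + 2) = (1 + (C (j : ℤ)) * X) * rho (j + 1) +
        X * (1 - X) * derivative (rho (j + 1)) from rfl]
      simp only [map_add, map_mul, map_one, Polynomial.aeval_X, map_sub,
        Polynomial.aeval_C, haeval, hd, eq_intCast, map_intCast]
      push_cast
      ring
    have hquot : ((1 * P.eval x + x * P.derivative.eval x) * (1 - x) ^ (j + 1) -
          x * P.eval x * ((j + 1 : ℕ) * (1 - x) ^ j * (-1))) / ((1 - x) ^ (j + 1)) ^ 2 =
        (Polynomial.aeval x (rho (j + 1 + 1)) : ℂ) / (1 - x) ^ (j + 1 + 1) := by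
      rw [haeval2]
      have hne' : (1 : ℂ) - x ≠ 0 := hx1
      field_simp
      push_cast
      ring
    -- now convert derivative sum info to a HasSum statement
    have hsum_f' : Summable (fun ν => f' ν x) :=
      Summable.of_norm_bounded hu (fun ν => hbound ν x hball)
    have hhs : HasSum (fun ν => x * f' ν x)
        (x * ((Polynomial.aeval x (rho (j + 1 + 1)) : ℂ) / (1 - x) ^ (j + 1 + 1))) := by
      have := hsum_f'.hasSum.mul_left x
      rwa [hderiv_eq, hquot] at this
    have : HasSum (fun ν : ℕ => ((ν : ℂ) + 1) ^ (j + 1 + 1 - 1) * x ^ (ν + 1))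
        (x * ((Polynomial.aeval x (rho (j + 1 + 1)) : ℂ) / (1 - x) ^ (j + 1 + 1))) := by
      apply hhs.congr_fun
      intro ν
      rw [hf'_def]
      simp only [Nat.add_sub_cancel]
      ring
    rwa [← mul_div_assoc] at this

set_option maxHeartbeats 1000000 in
theorem lambert_series_eq_rho_series (k : ℕ) (hk : 1 ≤ k) (q : ℂ)
    (hq0 : 0 < ‖q‖) (hq1 : ‖q‖ < 1) :
    ∑' ν : ℕ, ((ν : ℂ) + 1) ^ (k - 1) * q ^ (ν + 1) / (1 - q ^ (ν + 1)) =
      ∑' ν : ℕ, q ^ (ν + 1) * (Polynomial.aeval (q ^ (ν + 1)) (rho k)) /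
        (1 - q ^ (ν + 1)) ^ k := by
  have hq : ‖q‖ < 1 := by exact hq1
  have hqn : ∀ n : ℕ, ‖q ^ (n + 1)‖ < 1 := by
    intro n
    rw [norm_pow]
    exact pow_lt_one₀ (norm_nonneg q) hq (Nat.succ_ne_zero n)
  set f : ℕ → ℕ → ℂ := fun ν m => ((ν : ℂ) + 1) ^ (k - 1) * q ^ ((ν + 1) * (m + 1)) with hf_def
  -- summability of the double family
  have hFsum : Summable (Function.uncurry f) := by
    apply Summable.of_norm
    have h1 : Summable (fun n : ℕ => ((n : ℝ) + 1) ^ (k - 1) * ‖q‖ ^ (n + 1)) := by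
      have h1' := (summable_succ_pow_mul_geom (k - 1) (norm_nonneg q) hq).mul_right ‖q‖
      apply h1'.congr
      intro n
      ring
    have h2 : Summable (fun m : ℕ => ‖q‖ ^ m) :=
      summable_geometric_of_lt_one (norm_nonneg q) hq
    have hg : Summable (fun p : ℕ × ℕ =>
        (((p.1 : ℝ) + 1) ^ (k - 1) * ‖q‖ ^ (p.1 + 1)) * ‖q‖ ^ p.2) :=
      h1.mul_of_nonneg h2 (fun n => by positivity) (fun m => by positivity)
    apply Summable.of_nonneg_of_le (fun p => norm_nonneg _) _ hg
    rintro ⟨ν, m⟩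
    simp only [Function.uncurry, hf_def, norm_mul, norm_pow]
    have hnorm : ‖((ν : ℂ) + 1)‖ = (ν : ℝ) + 1 := by
      rw [show ((ν : ℂ) + 1) = ((ν + 1 : ℕ) : ℂ) by push_cast; ring, Complex.norm_natCast]
      push_cast; ring
    rw [hnorm, mul_assoc, ← pow_add]
    have hle : ‖q‖ ^ ((ν + 1) * (m + 1)) ≤ ‖q‖ ^ (ν + 1 + m) :=
      pow_le_pow_of_le_one (norm_nonneg q) hq.le (by nlinarith [Nat.zero_le ν, Nat.zero_le m])
    exact mul_le_mul_of_nonneg_left hle (by positivity)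
  calc ∑' ν : ℕ, ((ν : ℂ) + 1) ^ (k - 1) * q ^ (ν + 1) / (1 - q ^ (ν + 1))
      = ∑' ν : ℕ, ∑' m : ℕ, f ν m := by
        apply tsum_congr
        intro ν
        have h := (hasSum_geom_succ (hqn ν)).mul_left (((ν : ℂ) + 1) ^ (k - 1))
        rw [mul_div_assoc]
        rw [← h.tsum_eq]
        apply tsum_congr
        intro m
        rw [hf_def]
        simp only []
        rw [← pow_mul]
    _ = ∑' m : ℕ, ∑' ν : ℕ, f ν m := (Summable.tsum_comm hFsum).symm
    _ = ∑' ν : ℕ, q ^ (ν + 1) * (Polynomial.aeval (q ^ (ν + 1)) (rho k)) /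
        (1 - q ^ (ν + 1)) ^ k := by
        apply tsum_congr
        intro m
        have h := key_hasSum k hk (q ^ (m + 1)) (hqn m)
        rw [← h.tsum_eq]
        apply tsum_congr
        intro ν
        rw [hf_def]
        simp only []
        rw [← pow_mul, mul_comm (m + 1) (ν + 1)]
end

section
/- Let p be an integer with |p| ≥ 2 and set D_n(p) = Π_{l=1}^n Φ_l(p), where Φ_l is the l-th cyclotomic polynomial. Then lim_{n→∞} log|D_n(p)|/(n² log|p|) = 3/π². -/
open Polynomial Filter Real

section Aux
open ArithmeticFunction Finset

private lemma hasSum_moebius_div_sq' :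
    HasSum (fun n : ℕ => (moebius n : ℝ) / (n : ℝ) ^ 2) (6 / π ^ 2) := by
  have hre : (1 : ℝ) < (2 : ℂ).re := by norm_num
  have h1 : LSeries (fun n => (moebius n : ℂ)) 2 = 6 / (Real.pi : ℂ) ^ 2 := by
    have h := LSeries_one_mul_Lseries_moebius hre
    rw [LSeries_one_eq_riemannZeta hre, riemannZeta_two] at h
    have hπ : ((Real.pi : ℂ)) ^ 2 ≠ 0 := by
      simpa using Complex.ofReal_ne_zero.mpr Real.pi_ne_zero
    field_simp at h ⊢
    linear_combination h
  have h2 : LSeriesSummable (fun n => (moebius n : ℂ)) 2 :=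
    LSeriesSummable_moebius_iff.mpr hre
  have h3 : HasSum (fun n => LSeries.term (fun n => (moebius n : ℂ)) 2 n)
      (((6 / π ^ 2 : ℝ) : ℂ)) := by
    have h := h2.hasSum
    have heq : (∑' n, LSeries.term (fun n => (moebius n : ℂ)) 2 n)
        = LSeries (fun n => (moebius n : ℂ)) 2 := rfl
    rw [heq, h1] at h
    convert h using 2
    push_cast
    ring
  have h4 : ∀ n : ℕ, LSeries.term (fun n => (moebius n : ℂ)) 2 n
      = ((((moebius n : ℝ) / (n : ℝ) ^ 2 : ℝ)) : ℂ) := by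
    intro n
    rcases eq_or_ne n 0 with rfl | hn
    · simp [LSeries.term]
    · rw [LSeries.term_of_ne_zero hn]
      rw [show ((n : ℂ) ^ (2 : ℂ)) = (n : ℂ) ^ (2 : ℕ) by
        rw [← Complex.cpow_natCast]; norm_num]
      push_cast
      ring
  rw [funext h4] at h3
  exact Complex.hasSum_ofReal.mp h3

private lemma totient_moebius' (n : ℕ) (hn : 0 < n) :
    ((Nat.totient n : ℝ)) = ∑ x ∈ n.divisorsAntidiagonal, (moebius x.1 : ℝ) * x.2 := by
  have h := (sum_eq_iff_sum_smul_moebius_eq (R := ℝ)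
      (f := fun d => (Nat.totient d : ℝ)) (g := fun d => (d : ℝ))).mp ?_ n hn
  · rw [← h]
    apply Finset.sum_congr rfl
    intro x _
    rw [zsmul_eq_mul]
  · intro m hm
    rw [← Nat.cast_sum]
    exact_mod_cast congrArg (Nat.cast (R := ℝ)) (Nat.sum_totient m)

private lemma gauss_sum_real' (k : ℕ) :
    ∑ m ∈ Finset.Icc 1 k, (m : ℝ) = k * (k + 1) / 2 := by
  induction k with
  | zero => simp
  | succ k ih =>
    rw [Finset.sum_Icc_succ_top (by omega), ih]
    push_cast
    ring

private lemma sum_swap_divisors' (n : ℕ) (F : ℕ → ℕ → ℝ) :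
    ∑ l ∈ Finset.Icc 1 n, ∑ x ∈ l.divisorsAntidiagonal, F x.1 x.2
      = ∑ a ∈ Finset.Icc 1 n, ∑ m ∈ Finset.Icc 1 (n / a), F a m := by
  rw [Finset.sum_sigma', Finset.sum_sigma']
  apply Finset.sum_nbij' (fun x => ⟨x.2.1, x.2.2⟩) (fun y => ⟨y.1 * y.2, (y.1, y.2)⟩)
  · rintro ⟨l, a, b⟩ h
    simp only [Finset.mem_sigma, Finset.mem_Icc, Nat.mem_divisorsAntidiagonal] at h ⊢
    obtain ⟨⟨h1, h2⟩, h3, h4⟩ := h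
    have ha : a ≠ 0 := by rintro rfl; rw [zero_mul] at h3; omega
    have hb : b ≠ 0 := by rintro rfl; rw [mul_zero] at h3; omega
    refine ⟨⟨by omega, ?_⟩, by omega, ?_⟩
    · calc a ≤ a * b := Nat.le_mul_of_pos_right a (by omega)
        _ = l := h3
        _ ≤ n := h2
    · rw [Nat.le_div_iff_mul_le (by omega), mul_comm]
      omega
  · rintro ⟨a, m⟩ h
    simp only [Finset.mem_sigma, Finset.mem_Icc] at h
    obtain ⟨⟨h1, h2⟩, h3, h4⟩ := h
    rw [Nat.le_div_iff_mul_le (by omega)] at h4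
    refine Finset.mem_sigma.mpr ⟨Finset.mem_Icc.mpr ⟨?_, ?_⟩,
      Nat.mem_divisorsAntidiagonal.mpr ⟨rfl, ?_⟩⟩
    · exact Nat.mul_pos h1 h3
    · rw [mul_comm]; exact h4
    · exact (Nat.mul_pos h1 h3).ne'
  · rintro ⟨l, a, b⟩ h
    simp only [Finset.mem_sigma, Nat.mem_divisorsAntidiagonal] at h
    simp [h.2.1]
  · rintro ⟨a, m⟩ _; rfl
  · rintro ⟨l, a, b⟩ _; rfl

private noncomputable def fdc (n a : ℕ) : ℝ :=
  if a ∈ Finset.Icc 1 n then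
    (moebius a : ℝ) * ((n / a : ℕ) * ((n / a : ℕ) + 1) / 2) / (n : ℝ) ^ 2 else 0

private lemma floor_div_tendsto (a : ℕ) (ha : 0 < a) :
    Tendsto (fun n : ℕ => ((n / a : ℕ) : ℝ) / n) atTop (nhds (1 / a)) := by
  have hmod : Tendsto (fun n : ℕ => ((n % a : ℕ) : ℝ) / n) atTop (nhds 0) := by
    have hb : ∀ᶠ n : ℕ in atTop, ‖((n % a : ℕ) : ℝ) / n‖ ≤ (a : ℝ) / n := by
      filter_upwards [eventually_ge_atTop 1] with n hn
      rw [Real.norm_eq_abs, abs_of_nonneg (by positivity)]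
      gcongr
      exact_mod_cast (Nat.mod_lt n ha).le
    exact squeeze_zero_norm' hb (tendsto_const_div_atTop_nhds_zero_nat (a : ℝ))
  have heq : (fun n : ℕ => ((n / a : ℕ) : ℝ) / n)
      =ᶠ[atTop] (fun n : ℕ => (1 - ((n % a : ℕ) : ℝ) / n) / a) := by
    filter_upwards [eventually_ge_atTop 1] with n hn
    have h := Nat.div_add_mod n a
    have hn' : (n : ℝ) ≠ 0 := by positivity
    have ha' : (a : ℝ) ≠ 0 := by positivity
    have hcast : ((n / a : ℕ) : ℝ) = ((n : ℝ) - (n % a : ℕ)) / a := by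
      rw [eq_div_iff ha']
      have h2 : ((a * (n / a) : ℕ) : ℝ) = (n : ℝ) - (n % a : ℕ) := by
        have h3 : a * (n / a) = n - n % a := by omega
        rw [h3, Nat.cast_sub (Nat.mod_le n a)]
      push_cast at h2
      linarith
    rw [hcast, one_sub_div hn', div_div, div_div, mul_comm]
  rw [show (1 : ℝ) / a = (1 - 0) / a by ring]
  exact Tendsto.congr' heq.symm ((tendsto_const_nhds.sub hmod).div_const a)

private lemma totient_sum_tendsto' :
    Tendsto (fun n : ℕ => (∑ l ∈ Finset.Icc 1 n, (Nat.totient l : ℝ)) / (n : ℝ) ^ 2)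
      atTop (nhds (3 / π ^ 2)) := by
  have key : ∀ n : ℕ, 0 < n →
      (∑ l ∈ Finset.Icc 1 n, (Nat.totient l : ℝ)) / (n : ℝ) ^ 2 = ∑' a, fdc n a := by
    intro n hn
    have h0 : ∀ a ∉ Finset.Icc 1 n, fdc n a = 0 := by
      intro a ha; simp [fdc, ha]
    rw [tsum_eq_sum h0]
    have h1 : ∀ l ∈ Finset.Icc 1 n, (Nat.totient l : ℝ)
        = ∑ x ∈ l.divisorsAntidiagonal, (moebius x.1 : ℝ) * x.2 := by
      intro l hl
      exact totient_moebius' l (by simp at hl; omega)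
    rw [Finset.sum_congr rfl h1, sum_swap_divisors' n (fun a b => (moebius a : ℝ) * b)]
    rw [Finset.sum_div]
    apply Finset.sum_congr rfl
    intro a ha
    simp only [fdc, if_pos ha]
    rw [← Finset.mul_sum]
    rw [show (∑ m ∈ Finset.Icc 1 (n / a), (m : ℝ)) = (n / a : ℕ) * ((n / a : ℕ) + 1) / 2
      from gauss_sum_real' _]
  have hg : HasSum (fun a : ℕ => (moebius a : ℝ) / (2 * (a : ℝ) ^ 2)) (3 / π ^ 2) := by
    have hfun : (fun a : ℕ => (moebius a : ℝ) / (2 * (a : ℝ) ^ 2))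
        = fun a => ((moebius a : ℝ) / (a : ℝ) ^ 2) / 2 := by
      funext a; ring
    rw [hfun, show (3 : ℝ) / π ^ 2 = 6 / π ^ 2 / 2 by ring]
    exact hasSum_moebius_div_sq'.div_const 2
  have hbound_summable : Summable (fun a : ℕ => 1 / (a : ℝ) ^ 2) := by
    simpa using Real.summable_one_div_nat_pow.mpr (by norm_num : 1 < 2)
  have hpt : ∀ a : ℕ, Tendsto (fun n => fdc n a) atTop
      (nhds ((moebius a : ℝ) / (2 * (a : ℝ) ^ 2))) := by
    intro a
    rcases Nat.eq_zero_or_pos a with rfl | ha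
    · simp only [fdc]; simp
    · have heq : (fun n => fdc n a) =ᶠ[atTop]
          (fun n : ℕ => (moebius a : ℝ) / 2 * (((n / a : ℕ) : ℝ) / n)
            * ((((n / a : ℕ) : ℝ) + 1) / n)) := by
        filter_upwards [eventually_ge_atTop a, eventually_ge_atTop 1] with n hna hn1
        have hmem : a ∈ Finset.Icc 1 n := Finset.mem_Icc.mpr ⟨ha, hna⟩
        simp only [fdc, if_pos hmem]
        have hn' : (n : ℝ) ≠ 0 := by positivity
        field_simp
      have h2 : Tendsto (fun n : ℕ => (((n / a : ℕ) : ℝ) + 1) / n) atTop (nhds (1 / a)) := by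
        have hf : (fun n : ℕ => (((n / a : ℕ) : ℝ) + 1) / n)
            = fun n : ℕ => ((n / a : ℕ) : ℝ) / n + 1 / n := by
          funext n; ring
        rw [hf, show (1 : ℝ) / a = 1 / a + 0 by ring]
        exact (floor_div_tendsto a ha).add tendsto_one_div_atTop_nhds_zero_nat
      have hlim := ((tendsto_const_nhds (x := (moebius a : ℝ) / 2)).mul
        (floor_div_tendsto a ha)).mul h2
      have hX : (moebius a : ℝ) / (2 * (a : ℝ) ^ 2)
          = (moebius a : ℝ) / 2 * ((1 : ℝ) / a) * ((1 : ℝ) / a) := by ring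
      rw [hX]
      exact Tendsto.congr' heq.symm hlim
  have hbd : ∀ᶠ n : ℕ in atTop, ∀ a : ℕ, ‖fdc n a‖ ≤ 1 / (a : ℝ) ^ 2 := by
    filter_upwards [eventually_ge_atTop 1] with n hn a
    by_cases hmem : a ∈ Finset.Icc 1 n
    · simp only [fdc, if_pos hmem]
      obtain ⟨ha1, han⟩ := Finset.mem_Icc.mp hmem
      have ha0 : (0:ℝ) < a := by exact_mod_cast ha1
      have hn0 : (0:ℝ) < n := by exact_mod_cast hn
      have hq : ((n / a : ℕ) : ℝ) ≤ (n : ℝ) / a := Nat.cast_div_le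
      have hq1 : ((n / a : ℕ) : ℝ) + 1 ≤ 2 * ((n : ℝ) / a) := by
        have h1a : (1:ℝ) ≤ (n : ℝ) / a := by
          rw [le_div_iff₀ ha0]; exact_mod_cast by simpa using han
        linarith
      have hμ : |(moebius a : ℝ)| ≤ 1 := by
        exact_mod_cast abs_moebius_le_one (n := a)
      rw [Real.norm_eq_abs, abs_div, abs_mul]
      rw [abs_of_nonneg (by positivity : (0:ℝ) ≤ (n:ℝ)^2)]
      rw [abs_of_nonneg (by positivity : (0:ℝ) ≤ ((n / a : ℕ) : ℝ) * (((n / a : ℕ) : ℝ) + 1) / 2)]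
      have hnum : ((n / a : ℕ) : ℝ) * (((n / a : ℕ) : ℝ) + 1) / 2
          ≤ ((n : ℝ) / a) * (2 * ((n : ℝ) / a)) / 2 := by
        have hX : (0:ℝ) ≤ (n:ℝ)/a := by positivity
        have hx0 : (0:ℝ) ≤ ((n / a : ℕ) : ℝ) := by positivity
        nlinarith [mul_le_mul hq hq1 (by positivity : (0:ℝ) ≤ ((n / a : ℕ) : ℝ) + 1) hX]
      calc |(moebius a : ℝ)| * (((n / a : ℕ) : ℝ) * (((n / a : ℕ) : ℝ) + 1) / 2) / (n:ℝ)^2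
          ≤ 1 * (((n : ℝ) / a) * (2 * ((n : ℝ) / a)) / 2) / (n:ℝ)^2 := by
            gcongr
        _ = 1 / (a : ℝ) ^ 2 := by field_simp
    · simp only [fdc, if_neg hmem, norm_zero]
      positivity
  have hmain := tendsto_tsum_of_dominated_convergence hbound_summable hpt hbd
  rw [hg.tsum_eq] at hmain
  apply Tendsto.congr' _ hmain
  filter_upwards [eventually_ge_atTop 1] with n hn
  exact (key n hn).symm

variable {p : ℤ} (hp : 2 ≤ |p|)

include hp in
private lemma pow_sub_one_ne (b : ℕ) (hb : 1 ≤ b) : p ^ b - 1 ≠ 0 := by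
  intro h
  have h2 : p ^ b = 1 := by omega
  have habs := congrArg (|·|) h2
  simp only [abs_pow] at habs
  have h3 : |p| ^ b ≥ 2 ^ b := pow_le_pow_left₀ (by norm_num) hp b
  have h4 : (2:ℤ) ^ b ≥ 2 ^ 1 := pow_le_pow_right₀ (by norm_num) hb
  simp at habs
  omega

include hp in
private lemma cyclo_eval_ne (d : ℕ) (hd : 1 ≤ d) : (cyclotomic d ℤ).eval p ≠ 0 := by
  intro h
  have hprod : ∏ i ∈ d.divisors, (cyclotomic i ℤ).eval p = p ^ d - 1 := by
    have h1 := prod_cyclotomic_eq_X_pow_sub_one (by omega : 0 < d) ℤ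
    have h2 := congrArg (Polynomial.eval p) h1
    rw [eval_prod] at h2
    simpa using h2
  have hmem : d ∈ d.divisors := Nat.mem_divisors_self d (by omega)
  have hzero : ∏ i ∈ d.divisors, (cyclotomic i ℤ).eval p = 0 := Finset.prod_eq_zero hmem h
  rw [hprod] at hzero
  exact pow_sub_one_ne hp d hd hzero

include hp in
private lemma sum_log_cyclo (n : ℕ) (hn : 0 < n) :
    ∑ d ∈ n.divisors, Real.log |(((cyclotomic d ℤ).eval p : ℤ) : ℝ)|
      = Real.log |((p ^ n - 1 : ℤ) : ℝ)| := by
  have hprod : ∏ i ∈ n.divisors, (cyclotomic i ℤ).eval p = p ^ n - 1 := by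
    have h1 := prod_cyclotomic_eq_X_pow_sub_one hn ℤ
    have h2 := congrArg (Polynomial.eval p) h1
    rw [eval_prod] at h2
    simpa using h2
  rw [← hprod]
  push_cast
  rw [Finset.abs_prod, Real.log_prod]
  intro d hd
  have hd1 : 1 ≤ d := Nat.pos_of_mem_divisors hd
  have hne := cyclo_eval_ne hp d hd1
  simp only [ne_eq, abs_eq_zero]
  exact_mod_cast hne

private lemma sum_half_pow_eq (n : ℕ) :
    ∑ b ∈ Finset.Icc 1 n, (1/2:ℝ)^b = 1 - (1/2:ℝ)^n := by
  induction n with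
  | zero => simp
  | succ n ih => rw [Finset.sum_Icc_succ_top (by omega), ih]; ring

include hp in
private lemma hP2 : (2:ℝ) ≤ |(p:ℝ)| := by
  rw [← Int.cast_abs]
  exact_mod_cast hp

include hp in
private lemma log_pow_sub_one_est (b : ℕ) (hb : 1 ≤ b) :
    |Real.log |((p ^ b - 1 : ℤ) : ℝ)| - (b : ℝ) * Real.log (|(p:ℝ)|)| ≤ 2 * (1/2:ℝ)^b := by
  set P : ℝ := |(p:ℝ)| with hPdef
  have hP : (2:ℝ) ≤ P := hP2 hp
  set t : ℝ := (1/2:ℝ)^b with htdef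
  have ht0 : 0 < t := by positivity
  have ht : t ≤ 1/2 := by
    calc t = (1/2:ℝ)^b := rfl
      _ ≤ (1/2:ℝ)^1 := pow_le_pow_of_le_one (by norm_num) (by norm_num) hb
      _ = 1/2 := pow_one _
  have hPb : (0:ℝ) < P ^ b := by positivity
  have h1t : 1 ≤ t * P ^ b := by
    have hmp : t * P ^ b = ((1/2) * P) ^ b := by rw [mul_pow]
    rw [hmp]
    apply one_le_pow₀
    linarith
  have hXc : |((p ^ b - 1 : ℤ) : ℝ)| = |(p:ℝ) ^ b - 1| := by push_cast; rfl
  set X : ℝ := |(p:ℝ) ^ b - 1| with hXdef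
  have hlow : (1 - t) * P ^ b ≤ X := by
    have h1 := abs_sub_abs_le_abs_sub ((p:ℝ)^b) 1
    rw [abs_pow, abs_one] at h1
    have h2 : P ^ b - 1 ≤ X := by linarith
    nlinarith
  have hhigh : X ≤ (1 + t) * P ^ b := by
    have h2 : X ≤ |(p:ℝ)^b| + 1 := by
      calc X ≤ |(p:ℝ)^b| + |(1:ℝ)| := abs_sub _ _
        _ = |(p:ℝ)^b| + 1 := by rw [abs_one]
    rw [abs_pow] at h2
    nlinarith
  have hX0 : 0 < X := by nlinarith
  have hblog : (b : ℝ) * Real.log P = Real.log (P ^ b) := by rw [Real.log_pow]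
  rw [hXc, hblog]
  have hup : Real.log X - Real.log (P ^ b) ≤ 2 * t := by
    have h3 : Real.log X ≤ Real.log ((1 + t) * P ^ b) := Real.log_le_log hX0 hhigh
    rw [Real.log_mul (by positivity) (by positivity)] at h3
    have h4 : Real.log (1 + t) ≤ t := by
      have h5 := Real.log_le_sub_one_of_pos (by positivity : (0:ℝ) < 1 + t)
      linarith
    linarith
  have hdown : -(2 * t) ≤ Real.log X - Real.log (P ^ b) := by
    have h3 : Real.log ((1 - t) * P ^ b) ≤ Real.log X := Real.log_le_log (by nlinarith) hlow
    rw [Real.log_mul (by nlinarith) (by positivity)] at h3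
    have h4 : -Real.log (1 - t) ≤ 2 * t := by
      rw [← Real.log_inv]
      have h5 := Real.log_le_sub_one_of_pos (by
        have h6 : (0:ℝ) < 1 - t := by linarith
        positivity : (0:ℝ) < (1 - t)⁻¹)
      have h6 : (1 - t)⁻¹ - 1 ≤ 2 * t := by
        rw [inv_eq_one_div, div_sub' (by linarith : (1:ℝ) - t ≠ 0)]
        rw [div_le_iff₀ (by linarith)]
        nlinarith
      linarith
    linarith
  rw [abs_le]
  exact ⟨hdown, hup⟩

include hp in
private lemma log_cyclo_est (l : ℕ) (hl : 1 ≤ l) :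
    |Real.log (|(((cyclotomic l ℤ).eval p : ℤ) : ℝ)|)
      - (Nat.totient l : ℝ) * Real.log (|(p:ℝ)|)| ≤ 2 := by
  set P : ℝ := |(p:ℝ)| with hPdef
  have hmoeb : ∀ n > 0, ∑ x ∈ n.divisorsAntidiagonal,
      (moebius x.1) • Real.log (|(((p:ℤ) ^ x.2 - 1 : ℤ) : ℝ)|)
      = Real.log (|(((cyclotomic n ℤ).eval p : ℤ) : ℝ)|) := by
    apply (sum_eq_iff_sum_smul_moebius_eq
      (f := fun d => Real.log (|(((cyclotomic d ℤ).eval p : ℤ) : ℝ)|))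
      (g := fun b => Real.log (|(((p:ℤ) ^ b - 1 : ℤ) : ℝ)|))).mp
    intro n hn
    exact sum_log_cyclo hp n hn
  have hfl := hmoeb l hl
  have hphi := totient_moebius' l hl
  rw [← hfl, hphi]
  rw [Finset.sum_mul, ← Finset.sum_sub_distrib]
  have hstep : ∀ x ∈ l.divisorsAntidiagonal,
      |(moebius x.1) • Real.log (|(((p:ℤ) ^ x.2 - 1 : ℤ) : ℝ)|)
        - (moebius x.1 : ℝ) * x.2 * Real.log P| ≤ 2 * (1/2:ℝ)^x.2 := by
    rintro ⟨a, b⟩ hx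
    rw [Nat.mem_divisorsAntidiagonal] at hx
    have hb : 1 ≤ b := by
      rcases Nat.eq_zero_or_pos b with rfl | h
      · exfalso; apply hx.2; omega
      · exact h
    simp only [zsmul_eq_mul]
    have hfac : (moebius a : ℝ) * Real.log (|(((p:ℤ) ^ b - 1 : ℤ) : ℝ)|)
        - (moebius a : ℝ) * b * Real.log P
        = (moebius a : ℝ) * (Real.log (|(((p:ℤ) ^ b - 1 : ℤ) : ℝ)|) - (b:ℝ) * Real.log P) := by
      ring
    rw [hfac, abs_mul]
    have hμ : |(moebius a : ℝ)| ≤ 1 := by exact_mod_cast abs_moebius_le_one (n := a)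
    have hE := log_pow_sub_one_est hp b hb
    calc |(moebius a : ℝ)| * |Real.log (|(((p:ℤ) ^ b - 1 : ℤ) : ℝ)|) - (b:ℝ) * Real.log P|
        ≤ 1 * (2 * (1/2:ℝ)^b) := by
          apply mul_le_mul hμ hE (abs_nonneg _) (by norm_num)
      _ = 2 * (1/2:ℝ)^b := by ring
  calc |∑ x ∈ l.divisorsAntidiagonal, ((moebius x.1) • Real.log (|(((p:ℤ) ^ x.2 - 1 : ℤ) : ℝ)|)
        - (moebius x.1 : ℝ) * x.2 * Real.log P)|
      ≤ ∑ x ∈ l.divisorsAntidiagonal, |(moebius x.1) • Real.log (|(((p:ℤ) ^ x.2 - 1 : ℤ) : ℝ)|)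
        - (moebius x.1 : ℝ) * x.2 * Real.log P| := Finset.abs_sum_le_sum_abs _ _
    _ ≤ ∑ x ∈ l.divisorsAntidiagonal, 2 * (1/2:ℝ)^x.2 := Finset.sum_le_sum hstep
    _ = ∑ b ∈ l.divisors, 2 * (1/2:ℝ)^b := by
        rw [Nat.sum_divisorsAntidiagonal' (f := fun a b => 2 * (1/2:ℝ)^b)]
    _ ≤ ∑ b ∈ Finset.Icc 1 l, 2 * (1/2:ℝ)^b := by
        apply Finset.sum_le_sum_of_subset_of_nonneg
        · intro d hd
          rw [Nat.mem_divisors] at hd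
          rw [Finset.mem_Icc]
          have hne : d ≠ 0 := by
            rintro rfl
            exact hd.2 (zero_dvd_iff.mp hd.1)
          exact ⟨by omega, Nat.le_of_dvd (by omega) hd.1⟩
        · intros; positivity
    _ = 2 * ∑ b ∈ Finset.Icc 1 l, (1/2:ℝ)^b := by rw [Finset.mul_sum]
    _ ≤ 2 * 1 := by
        rw [sum_half_pow_eq]
        have hpos : (0:ℝ) ≤ (1/2:ℝ)^l := by positivity
        nlinarith
    _ = 2 := by norm_num

end Aux

/-- `D_n(p) = Π_{l=1}^n Φ_l(p)`, the common denominator (q-analogue of lcm(1,…,n)). -/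
noncomputable def Dpoly (p : ℤ) (n : ℕ) : ℤ := ∏ l ∈ Finset.Icc 1 n, (cyclotomic l ℤ).eval p

theorem Dpoly_asymptotics (p : ℤ) (hp : 2 ≤ |p|) :
    Tendsto (fun n : ℕ => Real.log |(Dpoly p n : ℝ)| / ((n : ℝ) ^ 2 * Real.log |(p : ℝ)|))
      atTop (nhds (3 / Real.pi ^ 2)) := by
  set P : ℝ := |(p:ℝ)| with hPdef
  have hP : (2:ℝ) ≤ P := hP2 hp
  have hL : Real.log 2 ≤ Real.log P := Real.log_le_log (by norm_num) hP
  have hL0 : 0 < Real.log P := lt_of_lt_of_le (Real.log_pos (by norm_num)) hL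
  set S : ℕ → ℝ := fun n => ∑ l ∈ Finset.Icc 1 n, (Nat.totient l : ℝ) with hSdef
  set logD : ℕ → ℝ := fun n => Real.log |((Dpoly p n : ℤ) : ℝ)| with hlogDdef
  -- log of the product
  have hlogD : ∀ n : ℕ, logD n
      = ∑ l ∈ Finset.Icc 1 n, Real.log |(((cyclotomic l ℤ).eval p : ℤ) : ℝ)| := by
    intro n
    have hcast : ((Dpoly p n : ℤ) : ℝ) = ∏ l ∈ Finset.Icc 1 n, (((cyclotomic l ℤ).eval p : ℤ) : ℝ) := by
      rw [Dpoly]; push_cast; rfl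
    rw [hlogDdef]
    simp only [hcast]
    rw [Finset.abs_prod, Real.log_prod]
    intro l hl
    have hl1 : 1 ≤ l := (Finset.mem_Icc.mp hl).1
    have := cyclo_eval_ne hp l hl1
    simp only [ne_eq, abs_eq_zero]
    exact_mod_cast this
  -- error bound
  have herr : ∀ n : ℕ, |logD n - S n * Real.log P| ≤ 2 * n := by
    intro n
    rw [hlogD n, hSdef]
    simp only
    rw [Finset.sum_mul, ← Finset.sum_sub_distrib]
    calc |∑ l ∈ Finset.Icc 1 n, (Real.log |(((cyclotomic l ℤ).eval p : ℤ) : ℝ)|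
          - (Nat.totient l : ℝ) * Real.log P)|
        ≤ ∑ l ∈ Finset.Icc 1 n, |Real.log |(((cyclotomic l ℤ).eval p : ℤ) : ℝ)|
          - (Nat.totient l : ℝ) * Real.log P| := Finset.abs_sum_le_sum_abs _ _
      _ ≤ ∑ l ∈ Finset.Icc 1 n, 2 := Finset.sum_le_sum (fun l hl =>
          log_cyclo_est hp l (Finset.mem_Icc.mp hl).1)
      _ ≤ 2 * n := by
          rw [Finset.sum_const, Nat.card_Icc]
          simp only [nsmul_eq_mul]
          have : (n + 1 - 1 : ℕ) = n := by omega
          rw [this]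
          push_cast
          linarith
  -- error term tends to zero
  have herr0 : Tendsto (fun n : ℕ => (logD n - S n * Real.log P) / ((n:ℝ)^2 * Real.log P))
      atTop (nhds 0) := by
    have hbnd : ∀ᶠ n : ℕ in atTop, ‖(logD n - S n * Real.log P) / ((n:ℝ)^2 * Real.log P)‖
        ≤ (2 / Real.log P) / n := by
      filter_upwards [eventually_ge_atTop 1] with n hn
      have hn0 : (0:ℝ) < n := by exact_mod_cast hn
      rw [Real.norm_eq_abs, abs_div, abs_of_nonneg (by positivity : (0:ℝ) ≤ (n:ℝ)^2 * Real.log P)]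
      rw [div_le_div_iff₀ (by positivity) (by positivity)]
      calc |logD n - S n * Real.log P| * n ≤ (2 * n) * n :=
            mul_le_mul_of_nonneg_right (herr n) (le_of_lt hn0)
        _ = 2 / Real.log P * ((n:ℝ)^2 * Real.log P) := by
            field_simp
    exact squeeze_zero_norm' hbnd (tendsto_const_div_atTop_nhds_zero_nat _)
  -- main term
  have hmain := totient_sum_tendsto'
  have hfinal := hmain.add herr0
  rw [add_zero] at hfinal
  apply Tendsto.congr' _ hfinal
  filter_upwards [eventually_ge_atTop 1] with n hn
  have hn0 : (0:ℝ) < n := by exact_mod_cast hn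
  have hn2 : ((n:ℝ)^2) ≠ 0 := by positivity
  have hLne : Real.log P ≠ 0 := ne_of_gt hL0
  show S n / (n:ℝ)^2 + (logD n - S n * Real.log P) / ((n:ℝ)^2 * Real.log P)
      = logD n / ((n:ℝ)^2 * Real.log P)
  field_simp
  ring
end
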